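/- Let G be a finite simple graph on n vertices and k > 2 an integer. Construct G' with vertex set V(G) × {1,...,k}, where for i,j distinct and both different from k, (u,i) is adjacent to (v,j) if and only if u and v are adjacent in G, and (v,k) is adjacent exactly to (v,i) for all i ≠ k. Then α(G') = n + (k−2)·α(G). -/

import Mathlib

open Finset

/-- The maximum size of an independent set of `G`. -/
noncomputable def indepNum {V : Type*} [Fintype V] (G : SimpleGraph V) : ℕ :=
  sSup {n | ∃ s : Finset V, (∀ u ∈ s, ∀ w ∈ s, ¬ G.Adj u w) ∧ s.card = n}

/-- The `k`-layered graph `G'` built from `G`: vertices are `V × Fin k`; each class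
`V × {i}` is independent; for `i ≠ j` both different from the last class, `(u,i)` is
adjacent to `(v,j)` iff `u ~ v` in `G`; the last class is joined to each other class by
a perfect matching on the copies of each vertex. -/
def layered {V : Type*} (G : SimpleGraph V) (k : ℕ) : SimpleGraph (V × Fin k) where
  Adj a b := a.2 ≠ b.2 ∧
    ((a.2.val < k - 1 ∧ b.2.val < k - 1 ∧ G.Adj a.1 b.1) ∨
     ((a.2.val = k - 1 ∨ b.2.val = k - 1) ∧ a.1 = b.1))
  symm := ⟨by
    rintro ⟨u, i⟩ ⟨v, j⟩ ⟨hne, h⟩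
    refine ⟨hne.symm, ?_⟩
    rcases h with ⟨hi, hj, hadj⟩ | ⟨hij, huv⟩
    · exact Or.inl ⟨hj, hi, hadj.symm⟩
    · exact Or.inr ⟨hij.symm, huv.symm⟩⟩
  loopless := ⟨by rintro ⟨u, i⟩ ⟨h, _⟩; exact h rfl⟩

section Aux

variable {X : Type*} [Fintype X] (G : SimpleGraph X)

lemma indep_bdd :
    BddAbove {n | ∃ s : Finset X, (∀ u ∈ s, ∀ w ∈ s, ¬ G.Adj u w) ∧ s.card = n} := by
  refine ⟨Fintype.card X, ?_⟩
  rintro n ⟨s, -, rfl⟩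
  simpa using Finset.card_le_univ s

lemma le_indepNum {s : Finset X} (h : ∀ u ∈ s, ∀ w ∈ s, ¬ G.Adj u w) :
    s.card ≤ indepNum G :=
  le_csSup (indep_bdd G) ⟨s, h, rfl⟩

lemma exists_indepNum :
    ∃ s : Finset X, (∀ u ∈ s, ∀ w ∈ s, ¬ G.Adj u w) ∧ s.card = indepNum G := by
  have h0 : (0 : ℕ) ∈ {n | ∃ s : Finset X, (∀ u ∈ s, ∀ w ∈ s, ¬ G.Adj u w) ∧ s.card = n} :=
    ⟨∅, by simp, by simp⟩
  exact Nat.sSup_mem ⟨0, h0⟩ (indep_bdd G)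

lemma indepNum_le {m : ℕ}
    (h : ∀ s : Finset X, (∀ u ∈ s, ∀ w ∈ s, ¬ G.Adj u w) → s.card ≤ m) :
    indepNum G ≤ m := by
  refine csSup_le ⟨0, ∅, by simp, by simp⟩ ?_
  rintro n ⟨s, hs, rfl⟩
  exact h s hs

end Aux

/-- For `k > 2`, `α(G') = n + (k-2)·α(G)` where `G'` is the `k`-layered graph of `G`. -/
theorem indepNum_layered {V : Type*} [Fintype V] [DecidableEq V]
    (G : SimpleGraph V) (k : ℕ) (hk : 2 < k) :
    indepNum (layered G k) = Fintype.card V + (k - 2) * indepNum G := by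
  classical
  have hk1 : k - 1 < k := by omega
  set last : Fin k := ⟨k - 1, hk1⟩ with hlast
  have hlastval : last.val = k - 1 := rfl
  have hfilt : (univ.filter fun i : Fin k => i.val < k - 1) = univ.erase last := by
    ext i
    have h1 := i.isLt
    simp only [mem_filter, mem_univ, true_and, mem_erase, and_true]
    have h2 : i = last ↔ i.val = k - 1 := by
      constructor
      · intro h; rw [h]
      · intro h; exact Fin.ext h
    rw [ne_eq, h2]
    omega
  have hfiltcard : (univ.filter fun i : Fin k => i.val < k - 1).card = k - 1 := by
    rw [hfilt, card_erase_of_mem (mem_univ _), card_univ, Fintype.card_fin]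
  apply le_antisymm
  · -- upper bound
    apply indepNum_le
    intro s hs
    set T := s.filter (fun a : V × Fin k => a.2.val < k - 1) with hT
    set B := s.filter (fun a : V × Fin k => ¬ a.2.val < k - 1) with hB
    have hsplit : T.card + B.card = s.card :=
      Finset.card_filter_add_card_filter_not _
    set U := T.image Prod.fst with hU
    have hUmem : ∀ v ∈ U, ∃ a ∈ s, a.1 = v ∧ a.2.val < k - 1 := by
      intro v hv
      obtain ⟨a, ha, rfl⟩ := mem_image.mp hv
      rw [hT, mem_filter] at ha
      exact ⟨a, ha.1, rfl, ha.2⟩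
    -- B is bounded by n - |U|
    have hBcard : B.card ≤ Fintype.card V - U.card := by
      have hinj : Set.InjOn Prod.fst (B : Set (V × Fin k)) := by
        rintro ⟨u, i⟩ hu ⟨v, j⟩ hv h
        simp only [mem_coe, hB, mem_filter, not_lt] at hu hv
        obtain ⟨-, hu2⟩ := hu
        obtain ⟨-, hv2⟩ := hv
        have hi := i.isLt
        have hj := j.isLt
        simp only at h hu2 hv2
        simp only [Prod.ext_iff, Fin.ext_iff]
        exact ⟨h, by omega⟩
      have hcardim : (B.image Prod.fst).card = B.card :=
        Finset.card_image_of_injOn hinj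
      have hsub : B.image Prod.fst ⊆ univ \ U := by
        intro v hv
        rw [mem_sdiff]
        refine ⟨mem_univ _, ?_⟩
        intro hvU
        obtain ⟨a, haB, ha1⟩ := mem_image.mp hv
        obtain ⟨b, hbs, hb1, hb2⟩ := hUmem v hvU
        rw [hB, mem_filter] at haB
        have hia := a.2.isLt
        have : (layered G k).Adj b a := by
          refine ⟨?_, Or.inr ⟨Or.inr (by omega), by rw [hb1, ha1]⟩⟩
          intro hba
          have : b.2.val = a.2.val := by rw [hba]
          omega
        exact hs b hbs a haB.1 this
      calc B.card = (B.image Prod.fst).card := hcardim.symm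
        _ ≤ (univ \ U).card := Finset.card_le_card hsub
        _ = Fintype.card V - U.card := by
            rw [card_sdiff_of_subset (subset_univ _), card_univ]
    -- fiberwise count on T
    set f : V → ℕ := fun v => (T.filter fun a => a.1 = v).card with hf
    have hfib : T.card = ∑ v ∈ U, f v :=
      Finset.card_eq_sum_card_fiberwise (fun a ha => Finset.mem_image_of_mem _ ha)
    have hfk : ∀ v, f v ≤ k - 1 := by
      intro v
      have hinj : Set.InjOn Prod.snd ((T.filter fun a => a.1 = v) : Set (V × Fin k)) := by
        rintro ⟨u, i⟩ hu ⟨w, j⟩ hw h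
        simp only [mem_coe, mem_filter] at hu hw
        simp only at h
        simp only [Prod.ext_iff]
        exact ⟨hu.2.trans hw.2.symm, h⟩
      have hcardim := Finset.card_image_of_injOn hinj
      have hsub : (T.filter fun a => a.1 = v).image Prod.snd ⊆
          univ.filter fun i : Fin k => i.val < k - 1 := by
        intro i hi
        obtain ⟨a, ha, rfl⟩ := mem_image.mp hi
        rw [mem_filter] at ha
        rw [hT, mem_filter] at ha
        simp only [mem_filter, mem_univ, true_and]
        exact ha.1.2
      calc f v = ((T.filter fun a => a.1 = v).image Prod.snd).card := hcardim.symm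
        _ ≤ (univ.filter fun i : Fin k => i.val < k - 1).card := Finset.card_le_card hsub
        _ = k - 1 := hfiltcard
    set Wset := U.filter (fun v => 2 ≤ f v) with hWset
    have hWindep : ∀ u ∈ Wset, ∀ w ∈ Wset, ¬ G.Adj u w := by
      intro u hu w hw hadj
      rw [hWset, mem_filter] at hu hw
      -- two elements in the fiber of u
      obtain ⟨a, ha, b, hb, hab⟩ := Finset.one_lt_card.mp (by omega : 1 < f u)
      simp only [hT, mem_filter] at ha hb
      obtain ⟨⟨has, hak⟩, hau⟩ := ha
      obtain ⟨⟨hbs, hbk⟩, hbu⟩ := hb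
      -- one element in the fiber of w
      have hwU := hw.1
      obtain ⟨c, hcs, hc1, hc2⟩ := hUmem w hwU
      have hane : a.2 ≠ c.2 ∨ b.2 ≠ c.2 := by
        by_contra h
        push_neg at h
        exact hab (Prod.ext (hau.trans hbu.symm) (h.1.trans h.2.symm))
      rcases hane with hne | hne
      · exact hs a has c hcs ⟨hne, Or.inl ⟨hak, hc2, by rw [hau, hc1]; exact hadj⟩⟩
      · exact hs b hbs c hcs ⟨hne, Or.inl ⟨hbk, hc2, by rw [hbu, hc1]; exact hadj⟩⟩
    have hWcard : Wset.card ≤ indepNum G := le_indepNum G hWindep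
    have hTcard : T.card ≤ U.card + (k - 2) * Wset.card := by
      rw [hfib]
      calc ∑ v ∈ U, f v ≤ ∑ v ∈ U, (1 + if 2 ≤ f v then k - 2 else 0) := by
            refine Finset.sum_le_sum ?_
            intro v hv
            by_cases h2 : 2 ≤ f v
            · simp only [h2, if_true]
              have := hfk v
              omega
            · simp only [h2, if_false]
              omega
        _ = U.card + (k - 2) * Wset.card := by
            rw [Finset.sum_add_distrib, Finset.sum_const, smul_eq_mul, mul_one,
              ← Finset.sum_filter, Finset.sum_const, smul_eq_mul, Nat.mul_comm]
    have hUn : U.card ≤ Fintype.card V := by simpa using Finset.card_le_univ U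
    have hmul : (k - 2) * Wset.card ≤ (k - 2) * indepNum G :=
      Nat.mul_le_mul_left _ hWcard
    set m := (k - 2) * indepNum G with hm
    set m' := (k - 2) * Wset.card with hm'
    omega
  · -- lower bound
    obtain ⟨I, hI, hIcard⟩ := exists_indepNum G
    set S : Finset (V × Fin k) :=
      I ×ˢ (univ.filter fun i : Fin k => i.val < k - 1) ∪ (univ \ I) ×ˢ {last} with hS
    have hmem : ∀ a : V × Fin k, a ∈ S ↔
        (a.1 ∈ I ∧ a.2.val < k - 1) ∨ (a.1 ∉ I ∧ a.2 = last) := by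
      intro a
      rw [hS, mem_union, mem_product, mem_product, mem_filter, mem_sdiff, mem_singleton]
      simp only [mem_univ, true_and]
    have hindep : ∀ u ∈ S, ∀ w ∈ S, ¬ (layered G k).Adj u w := by
      rintro ⟨u, i⟩ hu ⟨v, j⟩ hv ⟨hne, hadj⟩
      rw [hmem] at hu hv
      simp only at hu hv hne hadj
      rcases hu with ⟨huI, hi⟩ | ⟨huI, hi⟩ <;> rcases hv with ⟨hvI, hj⟩ | ⟨hvI, hj⟩
      · rcases hadj with ⟨-, -, hGuv⟩ | ⟨h1, -⟩
        · exact hI u huI v hvI hGuv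
        · omega
      · rcases hadj with ⟨-, hj', -⟩ | ⟨-, huv⟩
        · rw [hj] at hj'; simp [hlast] at hj'
        · rw [huv] at huI; exact hvI huI
      · rcases hadj with ⟨hi', -, -⟩ | ⟨-, huv⟩
        · rw [hi] at hi'; simp [hlast] at hi'
        · rw [← huv] at hvI; exact huI hvI
      · rw [hi, hj] at hne; exact hne rfl
    have hdisj : Disjoint (I ×ˢ (univ.filter fun i : Fin k => i.val < k - 1))
        ((univ \ I) ×ˢ {last}) := by
      rw [Finset.disjoint_left]
      rintro ⟨u, i⟩ h1 h2
      rw [Finset.mem_product] at h1 h2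
      simp only [mem_filter, mem_singleton] at h1 h2
      rw [h2.2] at h1
      simp [hlast] at h1
    have hcard : S.card = Fintype.card V + (k - 2) * indepNum G := by
      rw [hS, Finset.card_union_of_disjoint hdisj, Finset.card_product,
        Finset.card_product, hfiltcard, card_singleton, mul_one,
        card_sdiff_of_subset (subset_univ _), card_univ]
      have hIle : I.card ≤ Fintype.card V := by simpa using Finset.card_le_univ I
      rw [← hIcard]
      have hk2 : k - 1 = (k - 2) + 1 := by omega
      rw [hk2, Nat.mul_succ, Nat.mul_comm]
      set a := I.card
      set m := (k - 2) * a
      omega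
    calc Fintype.card V + (k - 2) * indepNum G = S.card := hcard.symm
      _ ≤ indepNum (layered G k) := le_indepNum _ hindep
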